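/- Let Δ ≥ 4 and let p, q, r, s ∈ {1,…,Δ} be pairwise distinct. Then, as linear operators on the vector-spinor space V, ⁅S^{qrs}, ⁅S^{qrs}, T^{pq}⁆⁆ + T^{pq} = 0, where the bracket of operators is the commutator. (This is the Serre-like consistency relation for the unfaithful vector-spinor representation of K(E₁₀); it holds for every dimension Δ.) -/

import Mathlib

/-- The standard positive-definite quadratic form on `ℝ^Δ`. -/
noncomputable def stdQuadraticForm (n : ℕ) : QuadraticForm ℝ (Fin n → ℝ) :=
  QuadraticMap.weightedSumSquares ℝ (fun _ : Fin n => (1 : ℝ))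

/-- The Clifford algebra `Cl(Δ)` of the standard positive-definite quadratic form on `ℝ^Δ`. -/
abbrev Cl (n : ℕ) := CliffordAlgebra (stdQuadraticForm n)

/-- The generators `e₁, …, e_Δ` of `Cl(Δ)`. -/
noncomputable def ee {n : ℕ} (a : Fin n) : Cl n :=
  CliffordAlgebra.ι (stdQuadraticForm n) (Pi.single a 1)


lemma stdQ_single {n : ℕ} (a : Fin n) : stdQuadraticForm n (Pi.single a 1) = 1 := by
  simp [stdQuadraticForm, QuadraticMap.weightedSumSquares_apply, smul_eq_mul,
    Pi.single_apply]

lemma ee_sq {n : ℕ} (a : Fin n) : ee a * ee a = 1 := by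
  rw [ee, CliffordAlgebra.ι_sq_scalar, stdQ_single, map_one]

lemma stdQ_polar {n : ℕ} {a b : Fin n} (h : a ≠ b) :
    QuadraticMap.polar (stdQuadraticForm n) (Pi.single a 1) (Pi.single b 1) = 0 := by
  rw [QuadraticMap.polar]
  simp only [stdQuadraticForm, QuadraticMap.weightedSumSquares_apply, smul_eq_mul, one_mul]
  rw [← Finset.sum_sub_distrib, ← Finset.sum_sub_distrib]
  apply Finset.sum_eq_zero
  intro i _
  rcases eq_or_ne i a with rfl | hia <;> rcases eq_or_ne i b with rfl | hib <;>
    simp_all [Pi.single_apply]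

lemma ee_anticomm {n : ℕ} {a b : Fin n} (h : a ≠ b) : ee a * ee b = -(ee b * ee a) := by
  have h2 := CliffordAlgebra.ι_mul_ι_add_swap (Q := stdQuadraticForm n)
    (Pi.single a (1:ℝ)) (Pi.single b 1)
  rw [stdQ_polar h, map_zero] at h2
  rw [ee, ee]
  exact eq_neg_of_add_eq_zero_left h2

section Helpers
variable {Δ : ℕ} {M : Type*} [AddCommGroup M] [Module (Cl Δ) M]

lemma sqM (a : Fin Δ) (m : M) : ee a • ee a • m = m := by
  rw [← mul_smul, ee_sq, one_smul]

lemma swapM {a b : Fin Δ} (h : a ≠ b) (m : M) : ee a • ee b • m = -(ee b • ee a • m) := by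
  rw [← mul_smul, ee_anticomm h, neg_smul, mul_smul]

noncomputable def clsmul (c : Cl Δ) (m : M) : M := c • m

lemma clsmul_def (c : Cl Δ) (m : M) : c • m = clsmul c m := rfl

lemma realpull [Module ℝ M] [SMulCommClass (Cl Δ) ℝ M] (c : Cl Δ) (t : ℝ) (m : M) :
    c • t • m = t • c • m := smul_comm c t m

end Helpers

section VectorSpinor

variable {Δ : ℕ} {M : Type*} [AddCommGroup M] [Module (Cl Δ) M]

/-- `Γ_d^{xy} := e_d e_x e_y` if `d ∉ {x,y}` and `0` otherwise. -/
noncomputable def Gam3 (d x y : Fin Δ) : Cl Δ :=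
  if d = x ∨ d = y then 0 else ee d * ee x * ee y

/-- The level-0 `K(E₁₀)` action on vector-spinors:
`(T^{ab}Ψ)_c := (1/2)·eₐe_b·Ψ_c + δ_c^a·Ψ_b − δ_c^b·Ψ_a`. -/
noncomputable def Tlev (a b : Fin Δ) (Ψ : Fin Δ → M) : Fin Δ → M := fun c =>
  (((1 : ℝ)/2) • (ee a * ee b)) • Ψ c
    + (if c = a then Ψ b else 0) - (if c = b then Ψ a else 0)

/-- The level-1 `K(E₁₀)` action on vector-spinors:
`(S^{abc}Ψ)_d := (1/2)·eₐe_be_c·Ψ_d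
  + (2/3)·(δ_d^a·(e_b·Ψ_c − e_c·Ψ_b) + δ_d^b·(e_c·Ψ_a − e_a·Ψ_c) + δ_d^c·(e_a·Ψ_b − e_b·Ψ_a))
  − (1/3)·(Γ_d^{ab}·Ψ_c + Γ_d^{bc}·Ψ_a + Γ_d^{ca}·Ψ_b)`. -/
noncomputable def Sop (a b c : Fin Δ) (Ψ : Fin Δ → M) : Fin Δ → M := fun d =>
  (((1 : ℝ)/2) • (ee a * ee b * ee c)) • Ψ d
    + (if d = a then (((2 : ℝ)/3) • ee b) • Ψ c - (((2 : ℝ)/3) • ee c) • Ψ b else 0)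
    + (if d = b then (((2 : ℝ)/3) • ee c) • Ψ a - (((2 : ℝ)/3) • ee a) • Ψ c else 0)
    + (if d = c then (((2 : ℝ)/3) • ee a) • Ψ b - (((2 : ℝ)/3) • ee b) • Ψ a else 0)
    - ((((1 : ℝ)/3) • Gam3 d a b) • Ψ c + (((1 : ℝ)/3) • Gam3 d b c) • Ψ a
        + (((1 : ℝ)/3) • Gam3 d c a) • Ψ b)

/-- The commutator of two operators on the space of vector-spinors. -/
def opComm (A B : (Fin Δ → M) → (Fin Δ → M)) : (Fin Δ → M) → (Fin Δ → M) :=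
  fun Ψ => A (B Ψ) - B (A Ψ)

end VectorSpinor

set_option maxHeartbeats 1600000 in
/-- the Serre-like consistency relation
`⁅S^{qrs}, ⁅S^{qrs}, T^{pq}⁆⁆ + T^{pq} = 0` for the unfaithful vector-spinor
representation, with `p, q, r, s` pairwise distinct, in any dimension `Δ ≥ 4`. -/
theorem stmt8 (Δ : ℕ) (hΔ : 4 ≤ Δ) (M : Type*) [AddCommGroup M] [Module (Cl Δ) M]
    (p q r s : Fin Δ)
    (hpq : p ≠ q) (hpr : p ≠ r) (hps : p ≠ s)
    (hqr : q ≠ r) (hqs : q ≠ s) (hrs : r ≠ s) :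
    ∀ Ψ : Fin Δ → M,
      opComm (Sop q r s) (opComm (Sop q r s) (Tlev p q)) Ψ + Tlev p q Ψ = 0 := by
  intro Ψ
  funext d
  letI : Module ℝ M := Module.compHom M (algebraMap ℝ (Cl Δ))
  haveI : IsScalarTower ℝ (Cl Δ) M :=
    ⟨fun r c m => by rw [Algebra.smul_def, mul_smul]; rfl⟩
  haveI : SMulCommClass (Cl Δ) ℝ M :=
    ⟨fun c r m => by
      show c • (algebraMap ℝ (Cl Δ) r) • m = (algebraMap ℝ (Cl Δ) r) • c • m
      rw [← mul_smul, ← mul_smul, Algebra.commutes]⟩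
  have hqp := hpq.symm; have hrp := hpr.symm; have hsp := hps.symm
  have hrq := hqr.symm; have hsq := hqs.symm; have hsr := hrs.symm
  simp only [opComm, Sop, Tlev, Gam3, Pi.add_apply, Pi.sub_apply, Pi.zero_apply]
  rcases eq_or_ne d p with rfl | hdp
  case inl =>
    simp only [hpq, hqp, hpr, hrp, hps, hsp, hqr, hrq, hqs, hsq, hrs, hsr,
      eq_self_iff_true, if_true, if_false, ite_true, ite_false, or_self, or_false, false_or,
      true_or, or_true, ite_smul, zero_smul, smul_zero, add_zero, zero_add, sub_zero, zero_sub,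
      neg_zero]
    simp only [mul_smul, smul_assoc, smul_sub, smul_add, smul_neg, neg_neg, sqM, realpull,
      swapM hqp, swapM hrp, swapM hrq, swapM hsp, swapM hsq, swapM hsr,
      smul_zero, add_zero, zero_add, sub_zero, zero_sub, neg_zero]
    simp only [clsmul_def]
    module
  rcases eq_or_ne d q with rfl | hdq
  case inl =>
    simp only [hpq, hqp, hpr, hrp, hps, hsp, hqr, hrq, hqs, hsq, hrs, hsr,
      eq_self_iff_true, if_true, if_false, ite_true, ite_false, or_self, or_false, false_or,
      true_or, or_true, ite_smul, zero_smul, smul_zero, add_zero, zero_add, sub_zero, zero_sub,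
      neg_zero]
    simp only [mul_smul, smul_assoc, smul_sub, smul_add, smul_neg, neg_neg, sqM, realpull,
      swapM hqp, swapM hrp, swapM hrq, swapM hsp, swapM hsq, swapM hsr,
      smul_zero, add_zero, zero_add, sub_zero, zero_sub, neg_zero]
    simp only [clsmul_def]
    module
  rcases eq_or_ne d r with rfl | hdr
  case inl =>
    simp only [hpq, hqp, hpr, hrp, hps, hsp, hqr, hrq, hqs, hsq, hrs, hsr,
      eq_self_iff_true, if_true, if_false, ite_true, ite_false, or_self, or_false, false_or,
      true_or, or_true, ite_smul, zero_smul, smul_zero, add_zero, zero_add, sub_zero, zero_sub,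
      neg_zero]
    simp only [mul_smul, smul_assoc, smul_sub, smul_add, smul_neg, neg_neg, sqM, realpull,
      swapM hqp, swapM hrp, swapM hrq, swapM hsp, swapM hsq, swapM hsr,
      smul_zero, add_zero, zero_add, sub_zero, zero_sub, neg_zero]
    simp only [clsmul_def]
    module
  rcases eq_or_ne d s with rfl | hds
  case inl =>
    simp only [hpq, hqp, hpr, hrp, hps, hsp, hqr, hrq, hqs, hsq, hrs, hsr,
      eq_self_iff_true, if_true, if_false, ite_true, ite_false, or_self, or_false, false_or,
      true_or, or_true, ite_smul, zero_smul, smul_zero, add_zero, zero_add, sub_zero, zero_sub,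
      neg_zero]
    simp only [mul_smul, smul_assoc, smul_sub, smul_add, smul_neg, neg_neg, sqM, realpull,
      swapM hqp, swapM hrp, swapM hrq, swapM hsp, swapM hsq, swapM hsr,
      smul_zero, add_zero, zero_add, sub_zero, zero_sub, neg_zero]
    simp only [clsmul_def]
    module
  case inr =>
    simp only [hpq, hqp, hpr, hrp, hps, hsp, hqr, hrq, hqs, hsq, hrs, hsr, hdp, hdq, hdr, hds,
      eq_self_iff_true, if_true, if_false, ite_true, ite_false, or_self, or_false, false_or,
      true_or, or_true, ite_smul, zero_smul, smul_zero, add_zero, zero_add, sub_zero, zero_sub,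
      neg_zero]
    simp only [mul_smul, smul_assoc, smul_sub, smul_add, smul_neg, neg_neg, sqM, realpull,
      swapM hqp, swapM hrp, swapM hrq, swapM hsp, swapM hsq, swapM hsr, swapM hdp, swapM hdq, swapM hdr, swapM hds,
      smul_zero, add_zero, zero_add, sub_zero, zero_sub, neg_zero]
    simp only [clsmul_def]
    module
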